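/- The left-arc matching of an m-diagram is well-defined: for every standard Young tableau T of shape (n,n,n) with rows R₁, R₂, R₃ and every j ∈ R₂, the set { i ∈ R₁ : i < j and i ≠ L(j′) for all j′ ∈ R₂ with j′ < j } is nonempty, so the greedy rule defines an injective function L : R₂ → R₁ with L(j) < j for all j ∈ R₂. -/

import Mathlib

/-!
STATEMENT 10: The left-arc matching of an m-diagram is well-defined: for every standard
Young tableau `T` of shape `(n,n,n)` with rows `R₁, R₂, R₃` and every `j ∈ R₂`, the set
`{ i ∈ R₁ : i < j and i ≠ L(j') for all j' ∈ R₂ with j' < j }` is nonempty, so the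
greedy rule defines an injective function `L : R₂ → R₁` with `L(j) < j` for all
`j ∈ R₂`.
-/

/-- `T` is a standard Young tableau of shape `(n,n,n) ⊢ 3n`: rows and columns strictly
increase and each of the values `1, …, 3n` is used exactly once.  `T r c` is the entry
in row `r`, column `c`. -/
def IsStandardNNN (n : ℕ) (T : Fin 3 → Fin n → ℕ) : Prop :=
  (∀ r : Fin 3, ∀ c c' : Fin n, c < c' → T r c < T r c') ∧
  (∀ r r' : Fin 3, r < r' → ∀ c : Fin n, T r c < T r' c) ∧
  (∀ (r : Fin 3) (c : Fin n), T r c ∈ Finset.Icc 1 (3 * n)) ∧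
  (∀ v, 1 ≤ v → v ≤ 3 * n → ∃! p : Fin 3 × Fin n, T p.1 p.2 = v)

/-- The set of entries of row `r` of `T` (`r = 0, 1, 2` giving `R₁, R₂, R₃`). -/
def rowSet (n : ℕ) (T : Fin 3 → Fin n → ℕ) (r : Fin 3) : Finset ℕ :=
  Finset.univ.image (T r)

/-- The set of elements of `A` already used as matches of the elements of `B`
smaller than `n`, processing the elements of `B` in increasing order greedily. -/
def usedMatches (A B : Finset ℕ) : ℕ → Finset ℕ
  | 0 => ∅
  | n + 1 =>
    let U := usedMatches A B n
    if n ∈ B then U ∪ {((A \ U).filter (· < n)).sup id} else U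

/-- The greedy matching rule of the m-diagram construction: processing the elements
`j` of `B` in increasing order, `greedyMatch A B j` is the largest element of `A`
smaller than `j` not already used as the match of an earlier element of `B`, i.e.
`greedyMatch A B j = max { a ∈ A : a < j and a ≠ greedyMatch A B j' for all j' ∈ B
with j' < j }`.  Applied with `A = R₁`, `B = R₂` it produces the left arcs
`(greedyMatch R₁ R₂ j, j)`; applied with `A = R₂`, `B = R₃` it produces the right
arcs. -/
def greedyMatch (A B : Finset ℕ) (j : ℕ) : ℕ :=
  ((A \ usedMatches A B j).filter (· < j)).sup id

lemma sup_id_mem {s : Finset ℕ} (h : s.Nonempty) : s.sup id ∈ s := by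
  have : s.sup id = s.max' h := by
    rw [Finset.max'_eq_sup', Finset.sup'_eq_sup]
  rw [this]
  exact s.max'_mem h

lemma filter_sdiff_eq (A U : Finset ℕ) (n : ℕ) :
    (A \ U).filter (· < n) = A.filter (· < n) \ U := by
  ext x; simp only [Finset.mem_filter, Finset.mem_sdiff]; tauto

lemma used_invariant (A B : Finset ℕ)
    (H : ∀ j ∈ B, (B.filter (· < j)).card < (A.filter (· < j)).card) :
    ∀ k, usedMatches A B k ⊆ A.filter (· < k) ∧
      (usedMatches A B k).card = (B.filter (· < k)).card := by
  intro k
  induction k with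
  | zero =>
    constructor
    · simp [usedMatches]
    · simp [usedMatches, Finset.filter_eq_empty_iff]
  | succ m ih =>
    have hsub : A.filter (· < m) ⊆ A.filter (· < m + 1) := by
      intro x hx
      rw [Finset.mem_filter] at hx ⊢
      exact ⟨hx.1, by omega⟩
    by_cases hm : m ∈ B
    · have hne : (A.filter (· < m) \ usedMatches A B m).Nonempty := by
        rw [← Finset.card_pos]
        have h1 := Finset.le_card_sdiff (usedMatches A B m) (A.filter (· < m))
        have h2 := H m hm
        have h3 := ih.2
        omega
      have hmem := sup_id_mem hne
      have hg : (A \ usedMatches A B m).filter (· < m) =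
          A.filter (· < m) \ usedMatches A B m := filter_sdiff_eq A _ m
      have hdef : usedMatches A B (m + 1) =
          usedMatches A B m ∪ {(A.filter (· < m) \ usedMatches A B m).sup id} := by
        simp [usedMatches, hm, hg]
      rw [Finset.mem_sdiff, Finset.mem_filter] at hmem
      constructor
      · rw [hdef]
        apply Finset.union_subset
        · exact ih.1.trans hsub
        · intro x hx
          rw [Finset.mem_singleton] at hx
          subst hx
          rw [Finset.mem_filter]
          exact ⟨hmem.1.1, by have := hmem.1.2; omega⟩
      · rw [hdef, Finset.card_union_of_disjoint (by
          rw [Finset.disjoint_singleton_right]; exact hmem.2),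
          Finset.card_singleton, ih.2]
        have : B.filter (· < m + 1) = insert m (B.filter (· < m)) := by
          ext x
          simp only [Finset.mem_filter, Finset.mem_insert]
          constructor
          · rintro ⟨hx, hlt⟩
            rcases Nat.lt_succ_iff_lt_or_eq.mp hlt with h | h
            · exact Or.inr ⟨hx, h⟩
            · exact Or.inl h
          · rintro (h | ⟨hx, hlt⟩)
            · exact ⟨by rw [h]; exact hm, by omega⟩
            · exact ⟨hx, by omega⟩
        rw [this, Finset.card_insert_of_notMem (by simp)]
    · have hdef : usedMatches A B (m + 1) = usedMatches A B m := by
        simp [usedMatches, hm]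
      constructor
      · rw [hdef]; exact ih.1.trans hsub
      · rw [hdef, ih.2]
        congr 1
        ext x
        simp only [Finset.mem_filter]
        constructor
        · rintro ⟨hx, h⟩
          exact ⟨hx, h.trans (Nat.lt_succ_self m)⟩
        · rintro ⟨hx, h⟩
          refine ⟨hx, ?_⟩
          rcases Nat.lt_succ_iff_lt_or_eq.mp h with h' | h'
          · exact h'
          · exact absurd (h' ▸ hx) hm

lemma avail_nonempty (A B : Finset ℕ)
    (H : ∀ j ∈ B, (B.filter (· < j)).card < (A.filter (· < j)).card)
    {j : ℕ} (hj : j ∈ B) :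
    (A.filter (· < j) \ usedMatches A B j).Nonempty := by
  rw [← Finset.card_pos]
  have h1 := Finset.le_card_sdiff (usedMatches A B j) (A.filter (· < j))
  have h2 := H j hj
  have h3 := (used_invariant A B H j).2
  omega

lemma greedy_mem (A B : Finset ℕ)
    (H : ∀ j ∈ B, (B.filter (· < j)).card < (A.filter (· < j)).card)
    {j : ℕ} (hj : j ∈ B) :
    greedyMatch A B j ∈ A.filter (· < j) \ usedMatches A B j := by
  rw [greedyMatch, filter_sdiff_eq]
  exact sup_id_mem (avail_nonempty A B H hj)

lemma mem_used_iff (A B : Finset ℕ) (k : ℕ) (x : ℕ) :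
    x ∈ usedMatches A B k ↔ ∃ j' ∈ B, j' < k ∧ greedyMatch A B j' = x := by
  induction k with
  | zero => simp [usedMatches]
  | succ m ih =>
    by_cases hm : m ∈ B
    · rw [show usedMatches A B (m+1) = usedMatches A B m ∪ {greedyMatch A B m} by
        simp [usedMatches, greedyMatch, hm]]
      simp only [Finset.mem_union, Finset.mem_singleton, ih]
      constructor
      · rintro (⟨j', h1, h2, h3⟩ | rfl)
        · exact ⟨j', h1, by omega, h3⟩
        · exact ⟨m, hm, Nat.lt_succ_self m, rfl⟩
      · rintro ⟨j', h1, h2, h3⟩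
        rcases Nat.lt_succ_iff_lt_or_eq.mp h2 with h | rfl
        · exact Or.inl ⟨j', h1, h, h3⟩
        · exact Or.inr h3.symm
    · rw [show usedMatches A B (m+1) = usedMatches A B m by simp [usedMatches, hm], ih]
      constructor
      · rintro ⟨j', h1, h2, h3⟩; exact ⟨j', h1, by omega, h3⟩
      · rintro ⟨j', h1, h2, h3⟩
        exact ⟨j', h1, by rcases Nat.lt_succ_iff_lt_or_eq.mp h2 with h | rfl; exact h; exact absurd h1 hm, h3⟩

lemma greedy_injOn (A B : Finset ℕ)
    (H : ∀ j ∈ B, (B.filter (· < j)).card < (A.filter (· < j)).card) :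
    Set.InjOn (greedyMatch A B) ↑B := by
  have key : ∀ j ∈ B, ∀ j' ∈ B, j < j' → greedyMatch A B j ≠ greedyMatch A B j' := by
    intro j hj j' hj' hlt heq
    have h1 : greedyMatch A B j ∈ usedMatches A B j' :=
      (mem_used_iff A B j' _).mpr ⟨j, hj, hlt, rfl⟩
    have h2 := greedy_mem A B H hj'
    rw [Finset.mem_sdiff] at h2
    exact h2.2 (heq ▸ h1)
  intro j hj j' hj' heq
  by_contra hne
  rcases Nat.lt_or_ge j j' with h | h
  · exact key j hj j' hj' h heq
  · exact key j' hj' j hj (by omega) heq.symm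

lemma hall_condition (n : ℕ) (T : Fin 3 → Fin n → ℕ) (hT : IsStandardNNN n T) :
    ∀ j ∈ rowSet n T 1,
      ((rowSet n T 1).filter (· < j)).card < ((rowSet n T 0).filter (· < j)).card := by
  intro j hj
  rw [rowSet, Finset.mem_image] at hj
  obtain ⟨c, -, rfl⟩ := hj
  have hrow := hT.1
  have hcol := hT.2.1
  have h01 : (0 : Fin 3) < 1 := by decide
  -- upper bound for row 1
  have hub : ((rowSet n T 1).filter (· < T 1 c)) ⊆ (Finset.Iio c).image (T 1) := by
    intro x hx
    rw [Finset.mem_filter, rowSet, Finset.mem_image] at hx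
    obtain ⟨⟨c', -, rfl⟩, hlt⟩ := hx
    rw [Finset.mem_image]
    refine ⟨c', ?_, rfl⟩
    rw [Finset.mem_Iio]
    by_contra hcc
    push_neg at hcc
    rcases lt_or_eq_of_le hcc with h | h
    · exact absurd (hrow 1 c c' h) (by omega)
    · subst h; omega
  have h1 : ((rowSet n T 1).filter (· < T 1 c)).card ≤ c.val := by
    calc ((rowSet n T 1).filter (· < T 1 c)).card
        ≤ ((Finset.Iio c).image (T 1)).card := Finset.card_le_card hub
      _ ≤ (Finset.Iio c).card := Finset.card_image_le
      _ = c.val := Fin.card_Iio c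
  -- lower bound for row 0
  have hlb : (Finset.Iic c).image (T 0) ⊆ (rowSet n T 0).filter (· < T 1 c) := by
    intro x hx
    rw [Finset.mem_image] at hx
    obtain ⟨c', hc', rfl⟩ := hx
    rw [Finset.mem_Iic] at hc'
    rw [Finset.mem_filter]
    refine ⟨Finset.mem_image_of_mem _ (Finset.mem_univ c'), ?_⟩
    rcases lt_or_eq_of_le hc' with h | h
    · exact (hrow 0 c' c h).trans (hcol 0 1 h01 c)
    · rw [h]; exact hcol 0 1 h01 c
  have h2 : c.val + 1 ≤ ((rowSet n T 0).filter (· < T 1 c)).card := by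
    have hinj : Set.InjOn (T 0) ↑(Finset.Iic c) := by
      intro a _ b _ hab
      by_contra hne
      rcases Ne.lt_or_gt hne with h | h
      · exact absurd hab (Nat.ne_of_lt (hrow 0 a b h))
      · exact absurd hab.symm (Nat.ne_of_lt (hrow 0 b a h))
    calc c.val + 1 = (Finset.Iic c).card := (Fin.card_Iic c).symm
      _ = ((Finset.Iic c).image (T 0)).card := (Finset.card_image_of_injOn hinj).symm
      _ ≤ _ := Finset.card_le_card hlb
  omega

/-- The left-arc matching is well-defined: for each `j ∈ R₂` the set of available left
endpoints is nonempty, and the greedy rule `L = greedyMatch R₁ R₂` is injective on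
`R₂`, takes values in `R₁`, and satisfies `L j < j`. -/
theorem left_arc_matching_well_defined (n : ℕ) (T : Fin 3 → Fin n → ℕ)
    (hT : IsStandardNNN n T) :
    (∀ j ∈ rowSet n T 1,
      ((rowSet n T 0).filter fun i => i < j ∧
        ∀ j' ∈ rowSet n T 1, j' < j → greedyMatch (rowSet n T 0) (rowSet n T 1) j' ≠ i).Nonempty) ∧
    Set.InjOn (greedyMatch (rowSet n T 0) (rowSet n T 1)) ↑(rowSet n T 1) ∧
    (∀ j ∈ rowSet n T 1,
      greedyMatch (rowSet n T 0) (rowSet n T 1) j ∈ rowSet n T 0 ∧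
      greedyMatch (rowSet n T 0) (rowSet n T 1) j < j) := by
  set A := rowSet n T 0
  set B := rowSet n T 1
  have H := hall_condition n T hT
  refine ⟨?_, greedy_injOn A B H, ?_⟩
  · intro j hj
    have hne := avail_nonempty A B H hj
    obtain ⟨x, hx⟩ := hne
    rw [Finset.mem_sdiff, Finset.mem_filter] at hx
    refine ⟨x, ?_⟩
    rw [Finset.mem_filter]
    refine ⟨hx.1.1, hx.1.2, ?_⟩
    intro j' hj' hlt heq
    exact hx.2 ((mem_used_iff A B j x).mpr ⟨j', hj', hlt, heq⟩)
  · intro j hj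
    have h := greedy_mem A B H hj
    rw [Finset.mem_sdiff, Finset.mem_filter] at h
    exact ⟨h.1.1, h.1.2⟩
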